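/- Let M, N be n×n real matrices with decompositions M = M_V + M_0 + (wt M)·E_n and N = N_V + N_0 + (wt N)·E_n, where N_V = a·1_n^T + 1_n·b^T with a, b orthogonal to 1_n. If M = N², then: (1) wt M = b^T a + n·(wt N)²; (2) M_V = y·1_n^T + 1_n·z^T where y = N_0 a + n·(wt N)·a and z = N_0^T b + n·(wt N)·b; and (3) M_0 = N_0² + n·a·b^T. -/
import Mathlib

open Matrix Finset

/-- An `n × n` real matrix has the constant sum property (is of type S) if there is a
weight `w` such that every row sum and every column sum equals `n * w`. -/
def IsTypeS {n : ℕ} (M : Matrix (Fin n) (Fin n) ℝ) : Prop :=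
  ∃ w : ℝ, (∀ i, ∑ j, M i j = n * w) ∧ (∀ j, ∑ i, M i j = n * w)

/-- An `n × n` real matrix has the vertex cross sum property (is of type V) if
`M i j + M k l = M i l + M k j` for all indices and all entries sum to zero. -/
def IsTypeV {n : ℕ} (M : Matrix (Fin n) (Fin n) ℝ) : Prop :=
  (∀ i j k l, M i j + M k l = M i l + M k j) ∧ (∑ i, ∑ j, M i j = 0)

/-- The weight of a matrix: the mean of all its entries. -/
noncomputable def wt {n : ℕ} (M : Matrix (Fin n) (Fin n) ℝ) : ℝ :=
  (1 / (n : ℝ) ^ 2) * ∑ i, ∑ j, M i j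

/-- The all-ones `n × n` matrix `E_n = 1ₙ 1ₙᵀ`. -/
def En (n : ℕ) : Matrix (Fin n) (Fin n) ℝ := Matrix.of fun _ _ => 1

/-- A type-S matrix of weight zero has all row and column sums zero. -/
lemma typeS_sums_zero {n : ℕ} (hn : (n:ℝ) ≠ 0) {A : Matrix (Fin n) (Fin n) ℝ}
    (hA : IsTypeS A) (hw : wt A = 0) :
    (∀ i, ∑ j, A i j = 0) ∧ (∀ j, ∑ i, A i j = 0) := by
  obtain ⟨w, hr, hc⟩ := hA
  have hsum : ∑ i, ∑ j, A i j = (n:ℝ)^2 * w := by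
    simp only [hr, Finset.sum_const, Finset.card_univ, Fintype.card_fin, nsmul_eq_mul]
    ring
  have hw0 : w = 0 := by
    rw [wt, hsum] at hw
    field_simp at hw
    exact hw
  subst hw0
  exact ⟨fun i => by simpa using hr i, fun j => by simpa using hc j⟩

/-- If `M = N²`, then in terms of the S+V decompositions of `M` and `N` (with
`N_V = a 1ₙᵀ + 1ₙ bᵀ`):
(1) `wt M = bᵀ a + n (wt N)²`;
(2) `M_V = y 1ₙᵀ + 1ₙ zᵀ` with `y = N₀ a + n (wt N) a` and `z = N₀ᵀ b + n (wt N) b`;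
(3) `M₀ = N₀² + n a bᵀ`. -/
theorem weights_of_square_factorisation {n : ℕ}
    (M N MV M0 N0 : Matrix (Fin n) (Fin n) ℝ) (a b : Fin n → ℝ)
    (ha : ∑ i, a i = 0) (hb : ∑ i, b i = 0)
    (hMV : IsTypeV MV) (hM0 : IsTypeS M0) (hM0w : wt M0 = 0)
    (hMdec : M = MV + M0 + wt M • En n)
    (hN0 : IsTypeS N0) (hN0w : wt N0 = 0)
    (hNdec : N = vecMulVec a (fun _ => 1) + vecMulVec (fun _ => 1) b + N0 +
      wt N • En n)
    (hfact : M = N * N) :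
    wt M = (∑ i, b i * a i) + n * wt N ^ 2 ∧
    (MV = vecMulVec (N0 *ᵥ a + ((n : ℝ) * wt N) • a) (fun _ => 1) +
          vecMulVec (fun _ => 1) (N0ᵀ *ᵥ b + ((n : ℝ) * wt N) • b)) ∧
    M0 = N0 * N0 + (n : ℝ) • vecMulVec a b := by
  rcases Nat.eq_zero_or_pos n with hn0 | hnpos
  · subst hn0
    refine ⟨by simp [wt], ?_, ?_⟩ <;> · ext i j; exact i.elim0
  have hn : (n : ℝ) ≠ 0 := Nat.cast_ne_zero.mpr hnpos.ne'
  set w := wt N with hw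
  obtain ⟨hrow, hcol⟩ := typeS_sums_zero hn hN0 hN0w
  obtain ⟨hMrow, hMcol⟩ := typeS_sums_zero hn hM0 hM0w
  -- the key entrywise expansion of M = N²
  have hNe : ∀ i k, N i k = a i + b k + N0 i k + w := by
    intro i k
    simp [hNdec, vecMulVec, En, Matrix.add_apply, Matrix.smul_apply]
  set Y : Fin n → ℝ := fun i => (N0 *ᵥ a) i + (n:ℝ) * w * a i with hY
  set Z : Fin n → ℝ := fun j => (N0ᵀ *ᵥ b) j + (n:ℝ) * w * b j with hZ
  set c : ℝ := (∑ k, b k * a k) + (n:ℝ) * w ^ 2 with hc'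
  have key : ∀ i j, M i j = Y i + Z j + ((N0 * N0) i j + (n:ℝ) * (a i * b j)) + c := by
    intro i j
    have hMij : M i j = ∑ k, (a i + b k + N0 i k + w) * (a k + b j + N0 k j + w) := by
      rw [hfact, Matrix.mul_apply]
      exact Finset.sum_congr rfl fun k _ => by rw [hNe, hNe]
    have expand : ∀ k, (a i + b k + N0 i k + w) * (a k + b j + N0 k j + w) =
        a i * a k + a i * b j + a i * N0 k j + a i * w
        + b k * a k + b k * b j + b k * N0 k j + b k * w
        + N0 i k * a k + N0 i k * b j + N0 i k * N0 k j + N0 i k * w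
        + w * a k + w * b j + w * N0 k j + w * w := fun k => by ring
    rw [hMij]
    simp only [expand, Finset.sum_add_distrib]
    have S1 : ∑ k, a i * a k = 0 := by rw [← Finset.mul_sum, ha, mul_zero]
    have S2 : ∑ _k : Fin n, a i * b j = n * (a i * b j) := by
      rw [Finset.sum_const, Finset.card_univ, Fintype.card_fin, nsmul_eq_mul]
    have S3 : ∑ k, a i * N0 k j = 0 := by rw [← Finset.mul_sum, hcol j, mul_zero]
    have S4 : ∑ _k : Fin n, a i * w = n * (a i * w) := by
      rw [Finset.sum_const, Finset.card_univ, Fintype.card_fin, nsmul_eq_mul]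
    have S6 : ∑ k, b k * b j = 0 := by rw [← Finset.sum_mul, hb, zero_mul]
    have S7 : ∑ k, b k * N0 k j = (N0ᵀ *ᵥ b) j := by
      simp [Matrix.mulVec, dotProduct, Matrix.transpose_apply, mul_comm]
    have S8 : ∑ k, b k * w = 0 := by rw [← Finset.sum_mul, hb, zero_mul]
    have S9 : ∑ k, N0 i k * a k = (N0 *ᵥ a) i := by
      simp [Matrix.mulVec, dotProduct]
    have S10 : ∑ k, N0 i k * b j = 0 := by rw [← Finset.sum_mul, hrow i, zero_mul]
    have S11 : ∑ k, N0 i k * N0 k j = (N0 * N0) i j := (Matrix.mul_apply).symm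
    have S12 : ∑ k, N0 i k * w = 0 := by rw [← Finset.sum_mul, hrow i, zero_mul]
    have S13 : ∑ k, w * a k = 0 := by rw [← Finset.mul_sum, ha, mul_zero]
    have S14 : ∑ _k : Fin n, w * b j = n * (w * b j) := by
      rw [Finset.sum_const, Finset.card_univ, Fintype.card_fin, nsmul_eq_mul]
    have S15 : ∑ k, w * N0 k j = 0 := by rw [← Finset.mul_sum, hcol j, mul_zero]
    have S16 : ∑ _k : Fin n, w * w = n * w ^ 2 := by
      rw [Finset.sum_const, Finset.card_univ, Fintype.card_fin, nsmul_eq_mul]; ring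
    rw [S1, S2, S3, S4, S6, S7, S8, S9, S10, S11, S12, S13, S14, S15, S16]
    simp only [hY, hZ, hc']
    ring
  -- auxiliary sum facts
  have TY : ∑ i, Y i = 0 := by
    simp only [hY, Finset.sum_add_distrib]
    have h1 : ∑ i, (N0 *ᵥ a) i = 0 := by
      simp only [Matrix.mulVec, dotProduct]
      rw [Finset.sum_comm]
      exact Finset.sum_eq_zero fun k _ => by rw [← Finset.sum_mul, hcol k, zero_mul]
    have h2 : ∑ i, (n:ℝ) * w * a i = 0 := by rw [← Finset.mul_sum, ha, mul_zero]
    rw [h1, h2, add_zero]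
  have TZ : ∑ j, Z j = 0 := by
    simp only [hZ, Finset.sum_add_distrib]
    have h1 : ∑ j, (N0ᵀ *ᵥ b) j = 0 := by
      simp only [Matrix.mulVec, dotProduct, Matrix.transpose_apply]
      rw [Finset.sum_comm]
      exact Finset.sum_eq_zero fun k _ => by rw [← Finset.sum_mul, hrow k, zero_mul]
    have h2 : ∑ j, (n:ℝ) * w * b j = 0 := by rw [← Finset.mul_sum, hb, mul_zero]
    rw [h1, h2, add_zero]
  have TProw : ∀ i, ∑ j, ((N0 * N0) i j + (n:ℝ) * (a i * b j)) = 0 := by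
    intro i
    rw [Finset.sum_add_distrib]
    have h1 : ∑ j, (N0 * N0) i j = 0 := by
      simp only [Matrix.mul_apply]
      rw [Finset.sum_comm]
      exact Finset.sum_eq_zero fun k _ => by rw [← Finset.mul_sum, hrow k, mul_zero]
    have h2 : ∑ j, (n:ℝ) * (a i * b j) = 0 := by
      simp only [← mul_assoc]
      rw [← Finset.mul_sum, hb, mul_zero]
    rw [h1, h2, add_zero]
  have TPcol : ∀ j, ∑ i, ((N0 * N0) i j + (n:ℝ) * (a i * b j)) = 0 := by
    intro j
    rw [Finset.sum_add_distrib]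
    have h1 : ∑ i, (N0 * N0) i j = 0 := by
      simp only [Matrix.mul_apply]
      rw [Finset.sum_comm]
      exact Finset.sum_eq_zero fun k _ => by rw [← Finset.sum_mul, hcol k, zero_mul]
    have h2 : ∑ i, (n:ℝ) * (a i * b j) = 0 := by
      have : ∀ i, (n:ℝ) * (a i * b j) = a i * ((n:ℝ) * b j) := fun i => by ring
      simp only [this]
      rw [← Finset.sum_mul, ha, zero_mul]
    rw [h1, h2, add_zero]
  -- (1) the weight
  have hwtM : wt M = c := by
    rw [wt]
    have hsum : ∑ i, ∑ j, M i j = (n:ℝ)^2 * c := by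
      have hrowM : ∀ i, ∑ j, M i j = (n:ℝ) * Y i + (n:ℝ) * c := by
        intro i
        simp only [key, Finset.sum_add_distrib, Finset.sum_const, Finset.card_univ,
          Fintype.card_fin, nsmul_eq_mul, TProw i, TZ]
        ring
      simp only [hrowM, Finset.sum_add_distrib, Finset.sum_const, Finset.card_univ,
        Fintype.card_fin, nsmul_eq_mul, ← Finset.mul_sum, TY]
      ring
    rw [hsum]
    field_simp
  -- entrywise form of the decomposition of M
  have hMent : ∀ i j, MV i j + M0 i j = Y i + Z j + ((N0 * N0) i j + (n:ℝ) * (a i * b j)) := by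
    intro i j
    have h1 : M i j = MV i j + M0 i j + wt M := by
      conv_lhs => rw [hMdec]
      simp [En, Matrix.add_apply, Matrix.smul_apply]
    have h2 := key i j
    rw [h1, hwtM] at h2
    linarith
  -- row and column sums of MV
  have hMVrow : ∀ i, ∑ j, MV i j = (n:ℝ) * Y i := by
    intro i
    have := Finset.sum_congr rfl fun j (_ : j ∈ Finset.univ) => hMent i j
    rw [Finset.sum_add_distrib, hMrow i, add_zero] at this
    rw [this]
    simp only [Finset.sum_add_distrib, Finset.sum_const, Finset.card_univ,
      Fintype.card_fin, nsmul_eq_mul, TZ, TProw i]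
    ring
  have hMVcol : ∀ j, ∑ i, MV i j = (n:ℝ) * Z j := by
    intro j
    have := Finset.sum_congr rfl fun i (_ : i ∈ Finset.univ) => hMent i j
    rw [Finset.sum_add_distrib, hMcol j, add_zero] at this
    rw [this]
    simp only [Finset.sum_add_distrib, Finset.sum_const, Finset.card_univ,
      Fintype.card_fin, nsmul_eq_mul, TY, TPcol j]
    ring
  -- the type-V structure pins down MV entrywise
  have hMVent : ∀ i j, MV i j = Y i + Z j := by
    intro i j
    have h3 : ∑ k, ∑ l, (MV i j + MV k l) = ∑ k, ∑ l, (MV i l + MV k j) :=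
      Finset.sum_congr rfl fun k _ => Finset.sum_congr rfl fun l _ => hMV.1 i j k l
    have h1 : ∑ k, ∑ l, (MV i j + MV k l) = (n:ℝ)^2 * MV i j := by
      simp only [Finset.sum_add_distrib, Finset.sum_const, Finset.card_univ,
        Fintype.card_fin, nsmul_eq_mul, hMV.2]
      ring
    have h2 : ∑ k, ∑ l, (MV i l + MV k j) = (n:ℝ)^2 * Y i + (n:ℝ)^2 * Z j := by
      simp only [Finset.sum_add_distrib, Finset.sum_const, Finset.card_univ,
        Fintype.card_fin, nsmul_eq_mul, ← Finset.mul_sum]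
      rw [hMVrow i, hMVcol j]
      ring
    rw [h1, h2] at h3
    have hn2 : (n:ℝ)^2 ≠ 0 := pow_ne_zero _ hn
    have : (n:ℝ)^2 * MV i j = (n:ℝ)^2 * (Y i + Z j) := h3.trans (by ring)
    exact mul_left_cancel₀ hn2 this
  refine ⟨by rw [hwtM], ?_, ?_⟩
  · ext i j
    simp only [Matrix.add_apply, vecMulVec_apply, Pi.add_apply, Pi.smul_apply,
      smul_eq_mul, hMVent i j, hY, hZ]
    ring
  · ext i j
    have h := hMent i j
    rw [hMVent i j] at h
    have : M0 i j = (N0 * N0) i j + (n:ℝ) * (a i * b j) := by linarith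
    simp only [Matrix.add_apply, Matrix.smul_apply, vecMulVec_apply, smul_eq_mul, this]
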